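/- For the piecewise function f of the counterexample on B = [−ε,ε]×[−1,1] given by f(x₁,x₂) = x₁(x₁+ε)(x₁−ε)cos(ω x₂), the partial derivative ∂f/∂x₂ = −ω x₁(x₁+ε)(x₁−ε) sin(ω x₂) satisfies ∫_B (∂f/∂x₂)² dx → ∞ as ω → ∞ only at rate O(ω²), while ∫_B (∂f/∂x₁)² dx is bounded uniformly in ω; hence for ω large enough the optimal rank-1 projector on B (minimizing the integrated squared residual gradient) projects onto the x₂-axis. -/

import Mathlib

open Matrix MeasureTheory Filter

lemma cms_prod_int (ε : ℝ) (F G : ℝ → ℝ) :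
    ∫ x in {x : Fin 2 → ℝ | x 0 ∈ Set.Icc (-ε) ε ∧ x 1 ∈ Set.Icc (-1:ℝ) 1},
      F (x 0) * G (x 1) ∂(volume : Measure (Fin 2 → ℝ))
    = (∫ s in Set.Icc (-ε) ε, F s) * (∫ t in Set.Icc (-1:ℝ) 1, G t) := by
  have h := ((volume_preserving_finTwoArrow ℝ).symm).setIntegral_preimage_emb
    (MeasurableEquiv.finTwoArrow (α := ℝ)).symm.measurableEmbedding
    (fun x => F (x 0) * G (x 1))
    {x : Fin 2 → ℝ | x 0 ∈ Set.Icc (-ε) ε ∧ x 1 ∈ Set.Icc (-1:ℝ) 1}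
  rw [← h]
  have hpre : (MeasurableEquiv.finTwoArrow (α := ℝ)).symm ⁻¹'
      {x : Fin 2 → ℝ | x 0 ∈ Set.Icc (-ε) ε ∧ x 1 ∈ Set.Icc (-1:ℝ) 1}
      = Set.Icc (-ε) ε ×ˢ Set.Icc (-1:ℝ) 1 := by
    ext p
    simp [MeasurableEquiv.finTwoArrow, Set.mem_prod, finTwoArrowEquiv, Prod.le_def]; tauto
  rw [hpre]
  have : ∀ p : ℝ × ℝ, (fun x : Fin 2 → ℝ => F (x 0) * G (x 1))
      ((MeasurableEquiv.finTwoArrow (α := ℝ)).symm p) = F p.1 * G p.2 := by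
    intro p; simp [MeasurableEquiv.finTwoArrow, finTwoArrowEquiv]
  simp only [this]
  exact setIntegral_prod_mul F G _ _

lemma cms_Aval (ε : ℝ) (hε : 0 < ε) :
    ∫ s in Set.Icc (-ε) ε, (s*(s+ε)*(s-ε))^2 = 16*ε^7/105 := by
  rw [MeasureTheory.integral_Icc_eq_integral_Ioc,
    ← intervalIntegral.integral_of_le (by linarith : -ε ≤ ε)]
  have : ∀ x ∈ Set.uIcc (-ε) ε, (x*(x+ε)*(x-ε))^2
      = x^6 - (2*ε^2)*x^4 + (ε^4)*x^2 := by intro x _; ring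
  rw [intervalIntegral.integral_congr this,
    intervalIntegral.integral_add (f := fun x => x^6 - (2*ε^2)*x^4) (g := fun x => (ε^4)*x^2)
      (((continuous_pow 6).sub
      ((continuous_const.mul (continuous_pow 4)))).intervalIntegrable _ _)
      ((continuous_const.mul (continuous_pow 2)).intervalIntegrable _ _),
    intervalIntegral.integral_sub (f := fun x => x^6) (g := fun x => (2*ε^2)*x^4)
      ((continuous_pow 6).intervalIntegrable _ _)
      ((continuous_const.mul (continuous_pow 4)).intervalIntegrable _ _),
    intervalIntegral.integral_const_mul, intervalIntegral.integral_const_mul,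
    integral_pow, integral_pow, integral_pow]
  ring

lemma cms_oddint (ε c : ℝ) (hε : 0 < ε) :
    ∫ s in Set.Icc (-ε) ε, ((3*s^2 - ε^2) * (c * (s*(s+ε)*(s-ε)))) = 0 := by
  rw [MeasureTheory.integral_Icc_eq_integral_Ioc,
    ← intervalIntegral.integral_of_le (by linarith : -ε ≤ ε)]
  have : ∀ x ∈ Set.uIcc (-ε) ε, (3*x^2 - ε^2) * (c * (x*(x+ε)*(x-ε)))
      = (3*c)*x^5 - (4*c*ε^2)*x^3 + (c*ε^4)*x^1 := by intro x _; ring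
  rw [intervalIntegral.integral_congr this,
    intervalIntegral.integral_add (f := fun x => (3*c)*x^5 - (4*c*ε^2)*x^3) (g := fun x => (c*ε^4)*x^1)
      ((((continuous_const.mul (continuous_pow 5)).sub
      ((continuous_const.mul (continuous_pow 3))))).intervalIntegrable _ _)
      ((continuous_const.mul (continuous_pow 1)).intervalIntegrable _ _),
    intervalIntegral.integral_sub (f := fun x => (3*c)*x^5) (g := fun x => (4*c*ε^2)*x^3)
      ((continuous_const.mul (continuous_pow 5)).intervalIntegrable _ _)
      ((continuous_const.mul (continuous_pow 3)).intervalIntegrable _ _),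
    intervalIntegral.integral_const_mul, intervalIntegral.integral_const_mul,
    intervalIntegral.integral_const_mul, integral_pow, integral_pow, integral_pow]
  ring

lemma cms_sinsq_lb (ω : ℝ) (hω : 1 ≤ ω) :
    (1:ℝ)/2 ≤ ∫ t in Set.Icc (-1:ℝ) 1, Real.sin (ω*t)^2 := by
  have hω0 : ω ≠ 0 := by linarith
  rw [MeasureTheory.integral_Icc_eq_integral_Ioc,
    ← intervalIntegral.integral_of_le (by norm_num : (-1:ℝ) ≤ 1)]
  have : ∫ t in (-1:ℝ)..1, Real.sin (ω*t)^2
      = ω⁻¹ • ∫ u in (ω * -1)..(ω * 1), Real.sin u ^ 2 := by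
    rw [intervalIntegral.integral_comp_mul_left (fun u => Real.sin u ^ 2) hω0]
  rw [this, integral_sin_sq]
  have h1 : Real.sin (ω * -1) * Real.cos (ω * -1) - Real.sin (ω*1) * Real.cos (ω*1)
      = -2 * (Real.sin ω * Real.cos ω) := by
    simp [mul_comm]; ring
  rw [h1]
  have h2 : |Real.sin ω * Real.cos ω| ≤ 1/2 := by
    have hb : |Real.sin (2*ω)| ≤ 1 := Real.abs_sin_le_one _
    rw [Real.sin_two_mul] at hb
    rw [show (2:ℝ) * Real.sin ω * Real.cos ω = 2*(Real.sin ω * Real.cos ω) by ring,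
      abs_mul, abs_two] at hb
    linarith
  have habs := abs_le.mp h2
  rw [smul_eq_mul]
  have hωinv : (0:ℝ) < ω⁻¹ := by positivity
  have : (-2 * (Real.sin ω * Real.cos ω) + ω * 1 - ω * -1) / 2
      = ω - Real.sin ω * Real.cos ω := by ring
  rw [this]
  have hle : ω - 1/2 ≤ ω - Real.sin ω * Real.cos ω := by linarith [habs.2]
  calc (1:ℝ)/2 ≤ ω⁻¹ * (ω - 1/2) := by
        rw [mul_sub, inv_mul_cancel₀ hω0]
        have : ω⁻¹ ≤ 1 := by rw [inv_le_one_iff₀]; right; linarith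
        nlinarith
    _ ≤ ω⁻¹ * (ω - Real.sin ω * Real.cos ω) :=
        mul_le_mul_of_nonneg_left hle (le_of_lt hωinv)

lemma cms_sinsq_ub (ω : ℝ) :
    ∫ t in Set.Icc (-1:ℝ) 1, Real.sin (ω*t)^2 ≤ 2 := by
  have h := norm_setIntegral_le_of_norm_le_const (μ := volume)
    (s := Set.Icc (-1:ℝ) 1) (f := fun t => Real.sin (ω*t)^2) (C := 1)
    (by rw [Real.volume_Icc]; exact ENNReal.ofReal_lt_top)
    (by intro t _
        rw [Real.norm_eq_abs, abs_of_nonneg (sq_nonneg _)]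
        exact Real.sin_sq_le_one (ω*t))
  rw [Real.norm_eq_abs] at h
  have h2 := (abs_le.mp h).2
  rw [measureReal_def, Real.volume_Icc] at h2
  norm_num at h2
  linarith

set_option maxHeartbeats 1600000 in
/-- On `B = [−ε,ε]×[−1,1]` with `f(x₁,x₂) = x₁(x₁+ε)(x₁−ε)cos(ω x₂)`: the integral of
`(∂f/∂x₁)²` over `B` is bounded uniformly in `ω`, the integral of `(∂f/∂x₂)²` tends to
infinity as `ω → ∞` but only at rate `O(ω²)`, and hence for `ω` large enough the optimal
rank-1 projector on `B` (minimizing the integrated squared residual gradient) is the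
projector onto the `x₂`-axis. -/
theorem counterexample_middle_strip_gradient
    (ε : ℝ) (hε : 0 < ε) (hε1 : ε < 1)
    (B : Set (Fin 2 → ℝ))
    (hB : B = {x | x 0 ∈ Set.Icc (-ε) ε ∧ x 1 ∈ Set.Icc (-1 : ℝ) 1})
    (d1 d2 : ℝ → (Fin 2 → ℝ) → ℝ)
    (hd1 : ∀ ω x, d1 ω x = (3 * x 0 ^ 2 - ε ^ 2) * Real.cos (ω * x 1))
    (hd2 : ∀ ω x, d2 ω x = -ω * (x 0 * (x 0 + ε) * (x 0 - ε)) * Real.sin (ω * x 1))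
    (gradf : ℝ → (Fin 2 → ℝ) → Fin 2 → ℝ)
    (hgrad : ∀ ω x, gradf ω x = ![d1 ω x, d2 ω x])
    (Q : Matrix (Fin 2) (Fin 2) ℝ)
    (hQ : Q = Matrix.of ![![0, 0], ![0, 1]]) :
    -- ∫_B (∂f/∂x₁)² is bounded uniformly in ω
    (∃ K : ℝ, ∀ ω : ℝ, ∫ x in B, d1 ω x ^ 2 ∂(volume : Measure (Fin 2 → ℝ)) ≤ K) ∧
    -- ∫_B (∂f/∂x₂)² → ∞ as ω → ∞, but only at rate O(ω²)
    Tendsto (fun ω : ℝ => ∫ x in B, d2 ω x ^ 2 ∂(volume : Measure (Fin 2 → ℝ)))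
      atTop atTop ∧
    (∃ K : ℝ, ∀ ω : ℝ, 1 ≤ ω →
      ∫ x in B, d2 ω x ^ 2 ∂(volume : Measure (Fin 2 → ℝ)) ≤ K * ω ^ 2) ∧
    -- for ω large enough, the projector onto the x₂-axis is optimal on B
    (∃ ω₀ : ℝ, ∀ ω : ℝ, ω₀ ≤ ω →
      ∀ P : Matrix (Fin 2) (Fin 2) ℝ, P * P = P → Pᵀ = P → P.rank = 1 →
        ∫ x in B, ∑ j, ((1 - Q) *ᵥ gradf ω x) j ^ 2 ∂(volume : Measure (Fin 2 → ℝ)) ≤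
          ∫ x in B, ∑ j, ((1 - P) *ᵥ gradf ω x) j ^ 2 ∂(volume : Measure (Fin 2 → ℝ))) := by
  -- geometry of B
  have hBeq : B = Set.Icc (![-ε,-1] : Fin 2 → ℝ) ![ε,1] := by
    rw [hB]; ext x
    simp [Set.mem_Icc, Pi.le_def, Fin.forall_fin_two]
    tauto
  have hBc : IsCompact B := hBeq ▸ isCompact_Icc
  have hab : (![-ε,-1] : Fin 2 → ℝ) ≤ ![ε,1] := by
    intro i; fin_cases i <;> simp <;> linarith
  have hvolB : (volume B).toReal = 4*ε := by
    rw [hBeq, Real.volume_Icc_pi_toReal hab, Fin.prod_univ_two]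
    simp; ring
  have hvolBfin : volume B < ⊤ := by
    rw [hBeq, Real.volume_Icc_pi]
    exact ENNReal.prod_lt_top (fun i _ => ENNReal.ofReal_lt_top)
  -- continuity
  have hc1 : ∀ ω, Continuous (fun x : Fin 2 → ℝ => d1 ω x) := by
    intro ω
    have h : (fun x : Fin 2 → ℝ => d1 ω x)
        = fun x => (3 * x 0 ^ 2 - ε ^ 2) * Real.cos (ω * x 1) := funext (hd1 ω)
    rw [h]
    exact ((continuous_const.mul ((continuous_apply 0).pow 2)).sub continuous_const).mul
      (Real.continuous_cos.comp (continuous_const.mul (continuous_apply 1)))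
  have hc2 : ∀ ω, Continuous (fun x : Fin 2 → ℝ => d2 ω x) := by
    intro ω
    have h : (fun x : Fin 2 → ℝ => d2 ω x)
        = fun x => -ω * (x 0 * (x 0 + ε) * (x 0 - ε)) * Real.sin (ω * x 1) := funext (hd2 ω)
    rw [h]
    exact (continuous_const.mul (((continuous_apply 0).mul ((continuous_apply 0).add
      continuous_const)).mul ((continuous_apply 0).sub continuous_const))).mul
      (Real.continuous_sin.comp (continuous_const.mul (continuous_apply 1)))
  -- integrability
  have hi1 : ∀ ω, IntegrableOn (fun x : Fin 2 → ℝ => d1 ω x ^ 2) B volume :=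
    fun ω => (((hc1 ω).pow 2).continuousOn).integrableOn_compact hBc
  have hi2 : ∀ ω, IntegrableOn (fun x : Fin 2 → ℝ => d2 ω x ^ 2) B volume :=
    fun ω => (((hc2 ω).pow 2).continuousOn).integrableOn_compact hBc
  have hi12 : ∀ ω, IntegrableOn (fun x : Fin 2 → ℝ => d1 ω x * d2 ω x) B volume :=
    fun ω => (((hc1 ω).mul (hc2 ω)).continuousOn).integrableOn_compact hBc
  -- product formulas
  have hI2 : ∀ ω : ℝ, ∫ x in B, d2 ω x ^ 2 ∂(volume : Measure (Fin 2 → ℝ))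
      = (ω^2 * (16*ε^7/105)) * ∫ t in Set.Icc (-1:ℝ) 1, Real.sin (ω*t)^2 := by
    intro ω
    have hfun : (fun x : Fin 2 → ℝ => d2 ω x ^ 2)
        = fun x => (fun s => ω^2 * (s*(s+ε)*(s-ε))^2) (x 0)
            * (fun t => Real.sin (ω*t)^2) (x 1) := by
      funext x; rw [hd2]; ring
    rw [hB, hfun, cms_prod_int ε (fun s => ω^2 * (s*(s+ε)*(s-ε))^2) (fun t => Real.sin (ω*t)^2),
      MeasureTheory.integral_const_mul, cms_Aval ε hε]
  have hI12 : ∀ ω : ℝ, ∫ x in B, d1 ω x * d2 ω x ∂(volume : Measure (Fin 2 → ℝ)) = 0 := by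
    intro ω
    have hfun : (fun x : Fin 2 → ℝ => d1 ω x * d2 ω x)
        = fun x => (fun s => (3*s^2 - ε^2) * ((-ω) * (s*(s+ε)*(s-ε)))) (x 0)
            * (fun t => Real.cos (ω*t) * Real.sin (ω*t)) (x 1) := by
      funext x; rw [hd1, hd2]; ring
    rw [hB, hfun, cms_prod_int ε (fun s => (3*s^2 - ε^2) * ((-ω) * (s*(s+ε)*(s-ε))))
      (fun t => Real.cos (ω*t) * Real.sin (ω*t)), cms_oddint ε (-ω) hε, zero_mul]
  -- part 1
  have part1 : ∀ ω : ℝ, ∫ x in B, d1 ω x ^ 2 ∂(volume : Measure (Fin 2 → ℝ))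
      ≤ 16*ε^4 * (4*ε) := by
    intro ω
    have hbd : ∀ x ∈ B, ‖d1 ω x ^ 2‖ ≤ 16*ε^4 := by
      intro x hx
      rw [hB] at hx
      obtain ⟨⟨h1, h2⟩, -⟩ := hx
      rw [Real.norm_eq_abs, abs_of_nonneg (sq_nonneg _), hd1]
      have hu : x 0 ^ 2 ≤ ε ^ 2 := by nlinarith [mul_nonneg (by linarith : (0:ℝ) ≤ ε - x 0) (by linarith : (0:ℝ) ≤ x 0 + ε)]
      have h3 : (3 * x 0 ^ 2 - ε ^ 2) ^ 2 ≤ 16 * ε ^ 4 := by nlinarith [sq_nonneg (x 0), sq_nonneg ε, sq_nonneg (x 0 ^ 2)]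
      have hcos2 : Real.cos (ω * x 1) ^ 2 ≤ 1 := Real.cos_sq_le_one _
      calc ((3 * x 0 ^ 2 - ε ^ 2) * Real.cos (ω * x 1)) ^ 2
          = (3 * x 0 ^ 2 - ε ^ 2) ^ 2 * Real.cos (ω * x 1) ^ 2 := by ring
        _ ≤ (16 * ε ^ 4) * 1 :=
            mul_le_mul h3 hcos2 (sq_nonneg _) (by positivity)
        _ = 16 * ε ^ 4 := by ring
    have h := norm_setIntegral_le_of_norm_le_const (μ := volume) (s := B)
      (C := 16*ε^4) hvolBfin hbd
    rw [Real.norm_eq_abs, measureReal_def, hvolB] at h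
    exact le_trans (le_abs_self _) h
  have hA : (0:ℝ) < 16*ε^7/105 := by positivity
  -- part 2
  have part2 : Tendsto (fun ω : ℝ => ∫ x in B, d2 ω x ^ 2 ∂(volume : Measure (Fin 2 → ℝ)))
      atTop atTop := by
    apply tendsto_atTop_mono' atTop
      (f₁ := fun ω : ℝ => (16*ε^7/105/2) * ω^2)
    · filter_upwards [eventually_ge_atTop (1:ℝ)] with ω hω
      rw [hI2 ω]
      have hS := cms_sinsq_lb ω hω
      nlinarith [mul_nonneg (mul_nonneg (sq_nonneg ω) hA.le) (sub_nonneg.mpr hS)]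
    · exact Tendsto.const_mul_atTop (by positivity)
        (tendsto_pow_atTop (two_ne_zero))
  -- part 3
  have part3 : ∀ ω : ℝ, 1 ≤ ω → ∫ x in B, d2 ω x ^ 2 ∂(volume : Measure (Fin 2 → ℝ))
      ≤ (2*(16*ε^7/105)) * ω^2 := by
    intro ω hω
    rw [hI2 ω]
    have hSu := cms_sinsq_ub ω
    nlinarith [mul_nonneg (mul_nonneg (sq_nonneg ω) hA.le) (sub_nonneg.mpr hSu)]
  refine ⟨⟨16*ε^4 * (4*ε), part1⟩, part2, ⟨2*(16*ε^7/105), part3⟩, ?_⟩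
  -- part 4
  obtain ⟨ω₀, hω₀⟩ := (part2.eventually_ge_atTop (16*ε^4 * (4*ε))).exists_forall_of_atTop
  refine ⟨ω₀, fun ω hω P hP2 hPt hPr => ?_⟩
  have hI21 : ∫ x in B, d1 ω x ^ 2 ∂(volume : Measure (Fin 2 → ℝ))
      ≤ ∫ x in B, d2 ω x ^ 2 ∂(volume : Measure (Fin 2 → ℝ)) :=
    le_trans (part1 ω) (hω₀ ω hω)
  set p := P 0 0 with hp
  set q := P 1 1 with hq
  set c := P 0 1 with hc
  have hc' : P 1 0 = c := by
    have := congrFun (congrFun hPt 0) 1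
    simpa [Matrix.transpose_apply] using this
  have hpp : p*p + c*c = p := by
    have h := congrFun (congrFun hP2 0) 0
    rw [Matrix.mul_apply, Fin.sum_univ_two, hc', ← hc, ← hp] at h
    linarith
  have hqq : q*q + c*c = q := by
    have h := congrFun (congrFun hP2 1) 1
    rw [Matrix.mul_apply, Fin.sum_univ_two, hc', ← hc, ← hq] at h
    nlinarith [h]
  have hdet : p*q - c*c = 0 := by
    by_contra hne
    have hu : IsUnit P.det := by
      rw [Matrix.det_fin_two, hc']
      exact isUnit_iff_ne_zero.mpr (by rw [← hp, ← hq, ← hc]; intro h; exact hne (by linarith [h]))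
    have := P.rank_of_isUnit ((Matrix.isUnit_iff_isUnit_det P).mpr hu)
    rw [hPr] at this
    simp at this
  have htr : p + q = 1 := by
    by_contra hne
    have hp0 : p = 0 := by
      have : p * (p + q - 1) = 0 := by nlinarith
      rcases mul_eq_zero.mp this with h | h
      · exact h
      · exact absurd (by linarith) hne
    have hq0 : q = 0 := by
      have : q * (p + q - 1) = 0 := by nlinarith
      rcases mul_eq_zero.mp this with h | h
      · exact h
      · exact absurd (by linarith) hne
    have hcc : c * c = 0 := by
      have h := hpp
      rw [hp0] at h
      linarith
    have hc0 : c = 0 := by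
      have := mul_self_eq_zero.mp hcc
      exact this
    have h00 : P 0 0 = 0 := by rw [← hp]; exact hp0
    have h11 : P 1 1 = 0 := by rw [← hq]; exact hq0
    have h01 : P 0 1 = 0 := by rw [← hc]; exact hc0
    have h10 : P 1 0 = 0 := by rw [hc']; exact hc0
    have hP0 : P = 0 := by
      ext i j
      fin_cases i <;> fin_cases j <;> simp only [Matrix.zero_apply] <;>
        first | exact h00 | exact h01 | exact h10 | exact h11
    rw [hP0, Matrix.rank_zero] at hPr
    exact absurd hPr (by norm_num)
  have hpnn : 0 ≤ p := by linarith [mul_self_nonneg p, mul_self_nonneg c, hpp]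
  -- pointwise identities
  have hQpt : ∀ x, (∑ j, ((1 - Q) *ᵥ gradf ω x) j ^ 2) = d1 ω x ^ 2 := by
    intro x
    rw [hgrad, hQ]
    simp [Matrix.mulVec, dotProduct, Fin.sum_univ_two, Matrix.sub_apply, Matrix.one_apply]
  have hPpt : ∀ x, (∑ j, ((1 - P) *ᵥ gradf ω x) j ^ 2)
      = (1-p) * (d1 ω x ^ 2) + (1-q) * (d2 ω x ^ 2) + (-2*c) * (d1 ω x * d2 ω x) := by
    intro x
    rw [hgrad]
    simp only [Matrix.mulVec, dotProduct, Fin.sum_univ_two, Matrix.sub_apply,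
      Matrix.one_apply_eq, Matrix.one_apply_ne (by decide : (0:Fin 2) ≠ 1),
      Matrix.one_apply_ne (by decide : (1:Fin 2) ≠ 0),
      Matrix.cons_val_zero, Matrix.cons_val_one, Matrix.head_cons]
    rw [hc']
    rw [← hp, ← hq, ← hc]
    linear_combination (d1 ω x ^ 2) * hpp + (d2 ω x ^ 2) * hqq
      + (2 * c * (d1 ω x * d2 ω x)) * htr
  have e1 : ∫ x in B, (1-p) * d1 ω x ^ 2 ∂(volume : Measure (Fin 2 → ℝ))
      = (1-p) * ∫ x in B, d1 ω x ^ 2 ∂(volume : Measure (Fin 2 → ℝ)) :=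
    MeasureTheory.integral_const_mul _ _
  have e2 : ∫ x in B, (1-q) * d2 ω x ^ 2 ∂(volume : Measure (Fin 2 → ℝ))
      = (1-q) * ∫ x in B, d2 ω x ^ 2 ∂(volume : Measure (Fin 2 → ℝ)) :=
    MeasureTheory.integral_const_mul _ _
  have e3 : ∫ x in B, (-2*c) * (d1 ω x * d2 ω x) ∂(volume : Measure (Fin 2 → ℝ))
      = (-2*c) * ∫ x in B, d1 ω x * d2 ω x ∂(volume : Measure (Fin 2 → ℝ)) :=
    MeasureTheory.integral_const_mul _ _
  have hsplitB : ∫ x in B, ((1-p) * d1 ω x ^ 2 + (1-q) * d2 ω x ^ 2) ∂(volume : Measure (Fin 2 → ℝ))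
      = (∫ x in B, (1-p) * d1 ω x ^ 2 ∂(volume : Measure (Fin 2 → ℝ)))
        + ∫ x in B, (1-q) * d2 ω x ^ 2 ∂(volume : Measure (Fin 2 → ℝ)) :=
    MeasureTheory.integral_add ((hi1 ω).const_mul _) ((hi2 ω).const_mul _)
  have hsplitA : ∫ x in B, ((1-p) * d1 ω x ^ 2 + (1-q) * d2 ω x ^ 2
        + (-2*c) * (d1 ω x * d2 ω x)) ∂(volume : Measure (Fin 2 → ℝ))
      = (∫ x in B, ((1-p) * d1 ω x ^ 2 + (1-q) * d2 ω x ^ 2) ∂(volume : Measure (Fin 2 → ℝ)))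
        + ∫ x in B, (-2*c) * (d1 ω x * d2 ω x) ∂(volume : Measure (Fin 2 → ℝ)) :=
    MeasureTheory.integral_add (((hi1 ω).const_mul _).add ((hi2 ω).const_mul _))
      ((hi12 ω).const_mul _)
  simp only [hQpt, hPpt]
  rw [hsplitA, hsplitB, e1, e2, e3, hI12 ω]
  have h1q : 1 - q = p := by linarith
  rw [h1q]
  nlinarith [hI21, hpnn]
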